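/- Let 0 ≤ k ≤ l be real numbers. There exists a constant C = C(k,l) > 0 such that for every bounded measurable f : ℝ²×ℝ² → [0,∞) and every measurable h : ℝ²×ℝ² → [0,∞) satisfying h(x,v) ≥ |v|²/2 for all (x,v), one has ‖ x ↦ ∫_{ℝ²} h(x,v)^{k/2} f(x,v) dv ‖_{L^{(l+2)/(k+2)}(ℝ²)} ≤ C ‖f‖_{L^∞(ℝ²×ℝ²)}^{(l−k)/(l+2)} · ( ∬_{ℝ²×ℝ²} h(x,v)^{l/2} f(x,v) dx dv )^{(k+2)/(l+2)}. -/

import Mathlib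

open MeasureTheory Real Filter
open scoped ENNReal Topology

noncomputable abbrev E2 := EuclideanSpace ℝ (Fin 2)

lemma enn_rpow_ne_top {a : ℝ≥0∞} (ha0 : a ≠ 0) (hat : a ≠ ⊤) (s : ℝ) : a ^ s ≠ ⊤ := by
  simp [ENNReal.rpow_eq_top_iff, ha0, hat]

lemma enn_id {a b : ℝ≥0∞} (ha0 : a ≠ 0) (hat : a ≠ ⊤) (hb0 : b ≠ 0) (hbt : b ≠ ⊤) (s : ℝ) :
    a * (b / a) ^ s = a ^ (1 - s) * b ^ s := by
  have hd0 : b / a ≠ 0 := by simp [ENNReal.div_eq_zero_iff, hb0, hat]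
  have hdt : b / a ≠ ⊤ := by simp [ENNReal.div_eq_top, hbt, ha0]
  have hA : 0 < a.toReal := ENNReal.toReal_pos ha0 hat
  have hB : 0 < b.toReal := ENNReal.toReal_pos hb0 hbt
  have fin1 : a * (b / a) ^ s ≠ ⊤ := ENNReal.mul_ne_top hat (enn_rpow_ne_top hd0 hdt s)
  have fin2 : a ^ (1 - s) * b ^ s ≠ ⊤ :=
    ENNReal.mul_ne_top (enn_rpow_ne_top ha0 hat _) (enn_rpow_ne_top hb0 hbt _)
  refine (ENNReal.toReal_eq_toReal_iff' fin1 fin2).mp ?_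
  rw [ENNReal.toReal_mul, ENNReal.toReal_mul, ← ENNReal.toReal_rpow, ← ENNReal.toReal_rpow,
    ← ENNReal.toReal_rpow, ENNReal.toReal_div]
  rw [Real.div_rpow hB.le hA.le, Real.rpow_sub hA, Real.rpow_one]
  ring

lemma opt {a b g : ℝ≥0∞} {α β : ℝ} (hα : 0 < α) (hβ : 0 ≤ β)
    (ha0 : a ≠ 0) (hat : a ≠ ⊤)
    (H : ∀ R : ℝ, 0 < R → g ≤ a * ENNReal.ofReal (R ^ α) + b * ENNReal.ofReal (R ^ (-β))) :
    g ≤ 2 * a ^ (β / (α + β)) * b ^ (α / (α + β)) := by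
  have hαβ : 0 < α + β := by linarith
  have hσ : 0 < α / (α + β) := div_pos hα hαβ
  rcases eq_or_ne b ⊤ with hbt | hbt
  · refine le_top.trans_eq ?_
    rw [hbt, ENNReal.top_rpow_of_pos hσ, ENNReal.mul_top]
    exact mul_ne_zero two_ne_zero (by simp [ENNReal.rpow_eq_zero_iff, ha0, hat])
  rcases eq_or_ne b 0 with hb0 | hb0
  · have hg : g ≤ 0 := by
      refine ENNReal.le_of_forall_pos_le_add fun ε hε _ => ?_
      rw [zero_add]
      set t : ℝ≥0∞ := (ε : ℝ≥0∞) / (a + 1) with ht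
      have ht0 : t ≠ 0 := by
        simp [ht, ENNReal.div_eq_zero_iff, hε.ne', ENNReal.add_ne_top, hat]
      have htt : t ≠ ⊤ := by
        simp [ht, ENNReal.div_eq_top, hε.ne']
      have hδ : 0 < t.toReal := ENNReal.toReal_pos ht0 htt
      set R : ℝ := t.toReal ^ α⁻¹ with hRdef
      have hR : 0 < R := Real.rpow_pos_of_pos hδ _
      have hRα : R ^ α = t.toReal := by
        rw [hRdef, ← Real.rpow_mul hδ.le, inv_mul_cancel₀ hα.ne', Real.rpow_one]
      have := H R hR
      rw [hb0, zero_mul, add_zero, hRα, ENNReal.ofReal_toReal htt] at this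
      refine this.trans ?_
      calc a * t ≤ (a + 1) * t := by gcongr; exact le_self_add
        _ = ε := ENNReal.mul_div_cancel (by simp) (ENNReal.add_ne_top.mpr ⟨hat, ENNReal.one_ne_top⟩)
    exact le_zero_iff.mp hg |>.le.trans zero_le
  · -- main case : 0 < b < ⊤
    set t : ℝ≥0∞ := b / a with ht
    have ht0 : t ≠ 0 := by simp [ht, ENNReal.div_eq_zero_iff, hb0, hat]
    have htt : t ≠ ⊤ := by simp [ht, ENNReal.div_eq_top, hbt, ha0]
    have hδ : 0 < t.toReal := ENNReal.toReal_pos ht0 htt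
    set R : ℝ := t.toReal ^ (α + β)⁻¹ with hRdef
    have hR : 0 < R := Real.rpow_pos_of_pos hδ _
    have hRα : ENNReal.ofReal (R ^ α) = t ^ (α / (α + β)) := by
      rw [hRdef, ← Real.rpow_mul hδ.le,
        show (α + β)⁻¹ * α = α / (α + β) by rw [inv_mul_eq_div],
        ← ENNReal.ofReal_rpow_of_pos hδ, ENNReal.ofReal_toReal htt]
    have hRβ : ENNReal.ofReal (R ^ (-β)) = t ^ (-(β / (α + β))) := by
      rw [hRdef, ← Real.rpow_mul hδ.le,
        show (α + β)⁻¹ * (-β) = -(β / (α + β)) by rw [inv_mul_eq_div]; ring,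
        ← ENNReal.ofReal_rpow_of_pos hδ, ENNReal.ofReal_toReal htt]
    have term1 : a * ENNReal.ofReal (R ^ α) = a ^ (β / (α + β)) * b ^ (α / (α + β)) := by
      rw [hRα, ht, enn_id ha0 hat hb0 hbt,
        show 1 - α / (α + β) = β / (α + β) by field_simp; ring]
    have term2 : b * ENNReal.ofReal (R ^ (-β)) = a ^ (β / (α + β)) * b ^ (α / (α + β)) := by
      rw [hRβ, ht, ENNReal.rpow_neg, ← ENNReal.inv_rpow,
        ENNReal.inv_div (Or.inl hat) (Or.inl ha0),
        enn_id hb0 hbt ha0 hat, show 1 - β / (α + β) = α / (α + β) by field_simp; ring, mul_comm]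
    calc g ≤ a * ENNReal.ofReal (R ^ α) + b * ENNReal.ofReal (R ^ (-β)) := H R hR
      _ = 2 * (a ^ (β / (α + β)) * b ^ (α / (α + β))) := by rw [term1, term2, two_mul]
      _ = 2 * a ^ (β / (α + β)) * b ^ (α / (α + β)) := by ring

lemma vol_ball_E2 (r : ℝ) (hr : 0 ≤ r) :
    volume (Metric.closedBall (0 : EuclideanSpace ℝ (Fin 2)) r)
      = ENNReal.ofReal (r ^ 2) * ENNReal.ofReal π := by
  rw [EuclideanSpace.volume_closedBall]
  have : (Fintype.card (Fin 2)) = 2 := by simp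
  rw [this]
  norm_num [Real.Gamma_two]
  rw [← ENNReal.ofReal_pow hr, ← ENNReal.ofReal_pow (Real.sqrt_nonneg _), Real.sq_sqrt Real.pi_pos.le]

set_option maxHeartbeats 1000000 in
/-- **kinetic interpolation inequality.** For real `0 ≤ k ≤ l` there is a
constant `C = C(k,l) > 0` such that for every bounded measurable nonnegative
phase-space density `f` and every measurable weight `h ≥ |v|²/2`,
`‖x ↦ ∫ h^{k/2} f dv‖_{L^{(l+2)/(k+2)}} ≤ C ‖f‖_∞^{(l-k)/(l+2)} (∬ h^{l/2} f)^{(k+2)/(l+2)}`. -/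
theorem stmt5 (k l : ℝ) (hk : 0 ≤ k) (hkl : k ≤ l) :
    ∃ C : ℝ, 0 < C ∧ ∀ f h : E2 × E2 → ℝ,
      Measurable f → (∀ z, 0 ≤ f z) → (∃ A : ℝ, ∀ z, f z ≤ A) →
      Measurable h → (∀ z, 0 ≤ h z) → (∀ z : E2 × E2, ‖z.2‖ ^ 2 / 2 ≤ h z) →
      (∫⁻ x : E2, (∫⁻ v : E2, ENNReal.ofReal (h (x, v) ^ (k / 2) * f (x, v)))
            ^ ((l + 2) / (k + 2))) ^ ((k + 2) / (l + 2))
        ≤ ENNReal.ofReal C * eLpNorm f ⊤ volume ^ ((l - k) / (l + 2)) *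
            (∫⁻ z : E2 × E2, ENNReal.ofReal (h z ^ (l / 2) * f z)) ^ ((k + 2) / (l + 2)) := by
  have h2k : (0:ℝ) < k + 2 := by linarith
  have h2l : (0:ℝ) < l + 2 := by linarith
  set θ : ℝ := (l - k) / (l + 2) with hθdef
  set P : ℝ := (l + 2) / (k + 2) with hPdef
  set Q : ℝ := (k + 2) / (l + 2) with hQdef
  have hθ : 0 ≤ θ := div_nonneg (by linarith) h2l.le
  have hP : 0 < P := div_pos h2l h2k
  have hQ : 0 < Q := div_pos h2k h2l
  have hPQ : P * Q = 1 := by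
    rw [hPdef, hQdef, div_mul_div_comm, mul_comm]
    exact div_self (by positivity)
  have hQP : Q * P = 1 := by rw [mul_comm]; exact hPQ
  refine ⟨2 * (2 * π) ^ θ, by positivity, ?_⟩
  intro f h hf hf0 hfA hh hh0 hhv
  set N : ℝ≥0∞ := eLpNorm f ⊤ volume with hNdef
  have hNt : N ≠ ⊤ := by
    obtain ⟨A, hA⟩ := hfA
    refine (eLpNormEssSup_lt_top_of_ae_bound (C := A) ?_).ne
    · filter_upwards with z
      rw [Real.norm_eq_abs, abs_of_nonneg (hf0 z)]
      exact hA z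
  -- inner and outer integrands
  set F : E2 → E2 → ℝ≥0∞ := fun x v => ENNReal.ofReal (h (x, v) ^ (k / 2) * f (x, v)) with hFdef
  set G : E2 → E2 → ℝ≥0∞ := fun x v => ENNReal.ofReal (h (x, v) ^ (l / 2) * f (x, v)) with hGdef
  set g : E2 → ℝ≥0∞ := fun x => ∫⁻ v, F x v with hgdef
  set m : E2 → ℝ≥0∞ := fun x => ∫⁻ v, G x v with hmdef
  have hGmeas : Measurable fun z : E2 × E2 => ENNReal.ofReal (h z ^ (l / 2) * f z) :=
    by fun_prop
  have hI : ∫⁻ x, m x = ∫⁻ z : E2 × E2, ENNReal.ofReal (h z ^ (l / 2) * f z) := by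
    rw [Measure.volume_eq_prod, lintegral_prod _ hGmeas.aemeasurable]
  rcases eq_or_ne N 0 with hN0 | hN0
  · -- trivial case f = 0 a.e.
    have hfz : f =ᵐ[volume] 0 := by
      have := (eLpNorm_eq_zero_iff hf.aestronglyMeasurable (by simp)).mp hN0
      exact this
    rw [Measure.volume_eq_prod] at hfz
    have hae := Measure.ae_ae_of_ae_prod hfz
    have hLHS : ∫⁻ x : E2, (g x) ^ P = 0 := by
      rw [← lintegral_zero]
      refine lintegral_congr_ae ?_
      filter_upwards [hae] with x hx
      have : g x = 0 := by
        rw [hgdef, ← lintegral_zero]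
        refine lintegral_congr_ae ?_
        filter_upwards [hx] with v hv
        simp only [Pi.zero_apply] at hv
        simp [hFdef, hv]
      rw [this, ENNReal.zero_rpow_of_pos hP]
    rw [show (∫⁻ x : E2, (∫⁻ v : E2, ENNReal.ofReal (h (x, v) ^ (k / 2) * f (x, v))) ^ P)
        = ∫⁻ x : E2, (g x) ^ P from rfl, hLHS, ENNReal.zero_rpow_of_pos hQ]
    exact zero_le
  · -- main case
    set a : ℝ≥0∞ := ENNReal.ofReal (2 * π) * N with hadef
    have h2π : (0:ℝ) < 2 * π := by positivity
    have ha0 : a ≠ 0 := mul_ne_zero (by simp [ENNReal.ofReal_eq_zero, h2π.not_ge, Real.pi_pos]) hN0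
    have hat : a ≠ ⊤ := ENNReal.mul_ne_top ENNReal.ofReal_ne_top hNt
    set α : ℝ := (k + 2) / 2 with hαdef
    set β : ℝ := (l - k) / 2 with hβdef
    have hα : 0 < α := by rw [hαdef]; linarith [h2k]
    have hβ : 0 ≤ β := by rw [hβdef]; linarith
    have hαβ : α + β = (l + 2) / 2 := by rw [hαdef, hβdef]; ring
    have hθ' : β / (α + β) = θ := by
      rw [hαβ, hβdef, hθdef, div_div_div_cancel_right₀ (two_ne_zero)]
    have hQ' : α / (α + β) = Q := by
      rw [hαβ, hαdef, hQdef, div_div_div_cancel_right₀ (two_ne_zero)]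
    -- a.e. pointwise bound on f
    have haef : ∀ᵐ x : E2, ∀ᵐ v : E2, ENNReal.ofReal (f (x, v)) ≤ N := by
      have h1 : ∀ᵐ z : E2 × E2, ENNReal.ofReal (f z) ≤ N := by
        have h2 := ae_le_eLpNormEssSup (f := f) (μ := (volume : Measure (E2 × E2)))
        rw [hNdef, eLpNorm_exponent_top]
        filter_upwards [h2] with z hz
        rwa [← Real.enorm_eq_ofReal (hf0 z)]
      rw [Measure.volume_eq_prod] at h1
      exact Measure.ae_ae_of_ae_prod h1
    -- key pointwise (in x) estimate
    have hkey : ∀ᵐ x : E2, g x ≤ 2 * a ^ θ * (m x) ^ Q := by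
      filter_upwards [haef] with x hx
      rw [← hθ', ← hQ']
      refine opt hα hβ ha0 hat ?_
      intro R hR
      have hSmeas : MeasurableSet {v : E2 | h (x, v) ≤ R} :=
        measurableSet_le (hh.comp measurable_prodMk_left) measurable_const
      have split : g x = (∫⁻ v in {v : E2 | h (x, v) ≤ R}, F x v)
          + ∫⁻ v in {v : E2 | h (x, v) ≤ R}ᶜ, F x v := (lintegral_add_compl (F x) hSmeas).symm
      have bound1 : ∫⁻ v in {v : E2 | h (x, v) ≤ R}, F x v ≤ a * ENNReal.ofReal (R ^ α) := by
        have pb : ∀ᵐ v ∂(volume : Measure E2), v ∈ {v : E2 | h (x, v) ≤ R} →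
            F x v ≤ ENNReal.ofReal (R ^ (k / 2)) * N := by
          filter_upwards [hx] with v hv hvS
          rw [hFdef]
          simp only []
          rw [ENNReal.ofReal_mul (Real.rpow_nonneg (hh0 _) _)]
          refine mul_le_mul' (ENNReal.ofReal_le_ofReal ?_) hv
          exact Real.rpow_le_rpow (hh0 _) hvS (by positivity)
        calc ∫⁻ v in {v : E2 | h (x, v) ≤ R}, F x v
            ≤ ∫⁻ _ in {v : E2 | h (x, v) ≤ R}, ENNReal.ofReal (R ^ (k / 2)) * N :=
              setLIntegral_mono_ae aemeasurable_const pb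
          _ = ENNReal.ofReal (R ^ (k / 2)) * N * volume {v : E2 | h (x, v) ≤ R} :=
              setLIntegral_const _ _
          _ ≤ ENNReal.ofReal (R ^ (k / 2)) * N *
              volume (Metric.closedBall (0 : E2) (Real.sqrt (2 * R))) := by
              gcongr
              intro v hv
              rw [Metric.mem_closedBall, dist_zero_right]
              rw [Real.le_sqrt (norm_nonneg v) (by positivity)]
              have := hhv (x, v)
              simp only [Set.mem_setOf_eq] at hv
              nlinarith [this, hv]
          _ = a * ENNReal.ofReal (R ^ α) := by
              rw [vol_ball_E2 _ (Real.sqrt_nonneg _), Real.sq_sqrt (by positivity : (0:ℝ) ≤ 2 * R),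
                hadef, ← ENNReal.ofReal_mul (by positivity)]
              rw [show ENNReal.ofReal (R ^ (k / 2)) * N * ENNReal.ofReal (2 * R * π)
                    = N * (ENNReal.ofReal (R ^ (k / 2)) * ENNReal.ofReal (2 * R * π)) by ring,
                show ENNReal.ofReal (2 * π) * N * ENNReal.ofReal (R ^ α)
                    = N * (ENNReal.ofReal (2 * π) * ENNReal.ofReal (R ^ α)) by ring,
                ← ENNReal.ofReal_mul (by positivity), ← ENNReal.ofReal_mul (by positivity)]
              congr 1
              rw [hαdef, show (k + 2) / 2 = k / 2 + 1 by ring, Real.rpow_add hR, Real.rpow_one]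
              ring
      have bound2 : ∫⁻ v in {v : E2 | h (x, v) ≤ R}ᶜ, F x v ≤ m x * ENNReal.ofReal (R ^ (-β)) := by
        have pb2 : ∀ v ∈ {v : E2 | h (x, v) ≤ R}ᶜ,
            F x v ≤ ENNReal.ofReal (R ^ (-β)) * G x v := by
          intro v hv
          simp only [Set.mem_compl_iff, Set.mem_setOf_eq, not_le] at hv
          have hhp : 0 < h (x, v) := hR.trans hv
          rw [hFdef, hGdef]
          simp only []
          rw [← ENNReal.ofReal_mul (by positivity)]
          refine ENNReal.ofReal_le_ofReal ?_
          have e1 : h (x, v) ^ (k / 2) = h (x, v) ^ (-β) * h (x, v) ^ (l / 2) := by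
            rw [← Real.rpow_add hhp, hβdef]
            congr 1
            ring
          rw [e1]
          have e2 : h (x, v) ^ (-β) ≤ R ^ (-β) :=
            Real.rpow_le_rpow_of_nonpos hR hv.le (by linarith)
          calc h (x, v) ^ (-β) * h (x, v) ^ (l / 2) * f (x, v)
              = h (x, v) ^ (-β) * (h (x, v) ^ (l / 2) * f (x, v)) := by ring
            _ ≤ R ^ (-β) * (h (x, v) ^ (l / 2) * f (x, v)) := by
                exact mul_le_mul_of_nonneg_right e2
                  (mul_nonneg (Real.rpow_nonneg (hh0 _) _) (hf0 (x, v)))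
        calc ∫⁻ v in {v : E2 | h (x, v) ≤ R}ᶜ, F x v
            ≤ ∫⁻ v in {v : E2 | h (x, v) ≤ R}ᶜ, ENNReal.ofReal (R ^ (-β)) * G x v :=
              setLIntegral_mono' hSmeas.compl pb2
          _ = ENNReal.ofReal (R ^ (-β)) * ∫⁻ v in {v : E2 | h (x, v) ≤ R}ᶜ, G x v :=
              lintegral_const_mul' _ _ ENNReal.ofReal_ne_top
          _ ≤ ENNReal.ofReal (R ^ (-β)) * m x := by
              gcongr
              exact setLIntegral_le_lintegral _ _
          _ = m x * ENNReal.ofReal (R ^ (-β)) := mul_comm _ _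
      calc g x = _ := split
        _ ≤ a * ENNReal.ofReal (R ^ α) + m x * ENNReal.ofReal (R ^ (-β)) :=
            add_le_add bound1 bound2
    -- assemble
    set K : ℝ≥0∞ := 2 * a ^ θ with hKdef
    have hKt : K ≠ ⊤ := ENNReal.mul_ne_top (by simp) (enn_rpow_ne_top ha0 hat θ)
    have step1 : ∫⁻ x : E2, (g x) ^ P ≤ K ^ P * ∫⁻ x, m x := by
      calc ∫⁻ x : E2, (g x) ^ P ≤ ∫⁻ x : E2, K ^ P * m x := by
            refine lintegral_mono_ae ?_
            filter_upwards [hkey] with x hx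
            calc (g x) ^ P ≤ (K * (m x) ^ Q) ^ P := ENNReal.rpow_le_rpow hx hP.le
              _ = K ^ P * ((m x) ^ Q) ^ P := ENNReal.mul_rpow_of_nonneg _ _ hP.le
              _ = K ^ P * m x := by rw [← ENNReal.rpow_mul, hQP, ENNReal.rpow_one]
        _ = K ^ P * ∫⁻ x, m x :=
            lintegral_const_mul' _ _ (ENNReal.rpow_ne_top_of_nonneg hP.le hKt)
    have step2 : (∫⁻ x : E2, (g x) ^ P) ^ Q ≤ K * (∫⁻ x, m x) ^ Q := by
      calc (∫⁻ x : E2, (g x) ^ P) ^ Q ≤ (K ^ P * ∫⁻ x, m x) ^ Q :=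
            ENNReal.rpow_le_rpow step1 hQ.le
        _ = (K ^ P) ^ Q * (∫⁻ x, m x) ^ Q := ENNReal.mul_rpow_of_nonneg _ _ hQ.le
        _ = K * (∫⁻ x, m x) ^ Q := by rw [← ENNReal.rpow_mul, hPQ, ENNReal.rpow_one]
    have hC : ENNReal.ofReal (2 * (2 * π) ^ θ) * N ^ θ = K := by
      rw [hKdef, hadef, ENNReal.mul_rpow_of_ne_top ENNReal.ofReal_ne_top hNt,
        ENNReal.ofReal_mul (by norm_num), ENNReal.ofReal_rpow_of_pos h2π]
      norm_num
      ring
    calc (∫⁻ x : E2, (g x) ^ P) ^ Q ≤ K * (∫⁻ x, m x) ^ Q := step2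
      _ = ENNReal.ofReal (2 * (2 * π) ^ θ) * N ^ θ *
          (∫⁻ z : E2 × E2, ENNReal.ofReal (h z ^ (l / 2) * f z)) ^ Q := by rw [hC, hI]
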